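/- Fix a rank-r matrix X♮ ∈ ℝ^{n₁×n₂} with singular value decomposition X♮ = UΣVᵀ, where U ∈ ℝ^{n₁×r}, V ∈ ℝ^{n₂×r} have orthonormal columns and Σ is diagonal with positive entries. Then the optimization problem: minimize tr(W₁) + tr(W₂) subject to [[W₁, X♮],[X♮ᵀ, W₂]] ⪰ 0 over W₁ ∈ S^{n₁}, W₂ ∈ S^{n₂}, has the unique solution W₁ = UΣUᵀ, W₂ = VΣVᵀ, with optimal value 2‖X♮‖_*. -/

import Mathlib

open Matrix Finset

section Aux

variable {m n p : Type*} [Fintype m] [Fintype n] [Fintype p]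
  [DecidableEq m] [DecidableEq n] [DecidableEq p]

lemma trace_conjTranspose_mul (B : Matrix m n ℝ) :
    (Bᴴ * B).trace = ∑ j, ∑ i, B i j ^ 2 := by
  simp [Matrix.trace, Matrix.diag, Matrix.mul_apply, Matrix.conjTranspose_apply, sq]

lemma psd_eq_conjTranspose_mul_self {A : Matrix n n ℝ} (hA : A.PosSemidef) :
    ∃ B : Matrix n n ℝ, A = Bᴴ * B := by
  open scoped MatrixOrder in
  obtain ⟨B, hB⟩ := CStarAlgebra.nonneg_iff_eq_star_mul_self.mp hA.nonneg
  exact ⟨B, hB⟩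

lemma psd_trace_nonneg {A : Matrix n n ℝ} (hA : A.PosSemidef) :
    0 ≤ A.trace := by
  obtain ⟨B, rfl⟩ := psd_eq_conjTranspose_mul_self hA
  rw [trace_conjTranspose_mul]
  positivity

lemma psd_trace_zero {A : Matrix n n ℝ} (hA : A.PosSemidef)
    (h : A.trace = 0) : A = 0 := by
  obtain ⟨B, rfl⟩ := psd_eq_conjTranspose_mul_self hA
  rw [trace_conjTranspose_mul] at h
  have hB : B = 0 := by
    ext i j
    have h1 : ∀ j ∈ Finset.univ, (0:ℝ) ≤ ∑ i, B i j ^ 2 := fun _ _ => by positivity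
    have h2 := (Finset.sum_eq_zero_iff_of_nonneg h1).mp h j (Finset.mem_univ j)
    have h3 : ∀ i ∈ Finset.univ, (0:ℝ) ≤ B i j ^ 2 := fun _ _ => by positivity
    have h4 := (Finset.sum_eq_zero_iff_of_nonneg h3).mp h2 i (Finset.mem_univ i)
    simpa using (pow_eq_zero_iff two_ne_zero).mp h4
  simp [hB]

lemma psd_quad_zero {M : Matrix n n ℝ} (hM : M.PosSemidef)
    (Z : Matrix n p ℝ) (h : Zᴴ * M * Z = 0) : M * Z = 0 := by
  obtain ⟨B, rfl⟩ := psd_eq_conjTranspose_mul_self hM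
  have h2 : (B * Z)ᴴ * (B * Z) = 0 := by
    rw [Matrix.conjTranspose_mul, ← Matrix.mul_assoc, Matrix.mul_assoc Zᴴ Bᴴ B]
    exact h
  have h3 : B * Z = 0 := Matrix.conjTranspose_mul_self_eq_zero.mp h2
  rw [Matrix.mul_assoc, h3, Matrix.mul_zero]

lemma proj_trace {n r : ℕ} (U : Matrix (Fin n) (Fin r) ℝ) (hU : Uᵀ * U = 1)
    {W : Matrix (Fin n) (Fin n) ℝ} (hW : W.PosSemidef) :
    (Uᵀ * W * U).trace ≤ W.trace ∧
      ((Uᵀ * W * U).trace = W.trace → W = U * Uᵀ * W) := by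
  have hWsym : Wᵀ = W := by
    rw [← Matrix.conjTranspose_eq_transpose_of_trivial]
    exact hW.isHermitian
  set K : Matrix (Fin n) (Fin n) ℝ := 1 - U * Uᵀ with hKdef
  have hPP : (U * Uᵀ) * (U * Uᵀ) = U * Uᵀ := by
    rw [Matrix.mul_assoc, ← Matrix.mul_assoc Uᵀ U Uᵀ, hU, Matrix.one_mul]
  have hKsym : Kᵀ = K := by
    rw [hKdef, Matrix.transpose_sub, Matrix.transpose_one, Matrix.transpose_mul,
      Matrix.transpose_transpose]
  have hKH : Kᴴ = K := by
    rw [Matrix.conjTranspose_eq_transpose_of_trivial]; exact hKsym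
  have hKK : K * K = K := by
    rw [hKdef]
    simp only [Matrix.sub_mul, Matrix.mul_sub, Matrix.one_mul, Matrix.mul_one, hPP]
    abel
  have hNpsd : (K * W * K).PosSemidef := by
    have := hW.mul_mul_conjTranspose_same K
    rwa [hKH] at this
  have hTrN : (K * W * K).trace = W.trace - (Uᵀ * W * U).trace := by
    rw [Matrix.trace_mul_cycle, hKK, hKdef, Matrix.sub_mul,
      Matrix.one_mul, Matrix.trace_sub, Matrix.mul_assoc, Matrix.trace_mul_comm]
  constructor
  · have := psd_trace_nonneg hNpsd
    rw [hTrN] at this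
    linarith
  · intro heq
    have hN0 : K * W * K = 0 := by
      apply psd_trace_zero hNpsd
      rw [hTrN, heq]; ring
    have hWK : W * K = 0 := by
      apply psd_quad_zero hW K
      rwa [hKH]
    have hKW : K * W = 0 := by
      have := congrArg Matrix.transpose hWK
      rwa [Matrix.transpose_mul, hKsym, hWsym, Matrix.transpose_zero] at this
    rw [hKdef, Matrix.sub_mul, Matrix.one_mul, sub_eq_zero] at hKW
    exact hKW

end Aux

/-- For `X♮ = U Σ Vᵀ` with `U, V` having orthonormal columns and `Σ = diag σ` positive, the
problem `min tr W₁ + tr W₂ s.t. [[W₁, X♮],[X♮ᵀ, W₂]] ⪰ 0` has the unique solution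
`W₁ = UΣUᵀ`, `W₂ = VΣVᵀ`, with optimal value `2 tr Σ = 2‖X♮‖_*`. -/
theorem stmt7 (n₁ n₂ r : ℕ)
    (U : Matrix (Fin n₁) (Fin r) ℝ) (V : Matrix (Fin n₂) (Fin r) ℝ)
    (hU : Uᵀ * U = 1) (hV : Vᵀ * V = 1)
    (σ : Fin r → ℝ) (hσ : ∀ i, 0 < σ i)
    (Xnat : Matrix (Fin n₁) (Fin n₂) ℝ) (hXnat : Xnat = U * Matrix.diagonal σ * Vᵀ) :
    ((Matrix.fromBlocks (U * Matrix.diagonal σ * Uᵀ) Xnat Xnatᵀ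
        (V * Matrix.diagonal σ * Vᵀ)).PosSemidef ∧
      (U * Matrix.diagonal σ * Uᵀ).trace + (V * Matrix.diagonal σ * Vᵀ).trace
        = 2 * ∑ i, σ i) ∧
    ∀ (W₁ : Matrix (Fin n₁) (Fin n₁) ℝ) (W₂ : Matrix (Fin n₂) (Fin n₂) ℝ),
      (Matrix.fromBlocks W₁ Xnat Xnatᵀ W₂).PosSemidef →
      2 * ∑ i, σ i ≤ W₁.trace + W₂.trace ∧
        (W₁.trace + W₂.trace = 2 * ∑ i, σ i →
          W₁ = U * Matrix.diagonal σ * Uᵀ ∧ W₂ = V * Matrix.diagonal σ * Vᵀ) := by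
  subst hXnat
  set D : Matrix (Fin r) (Fin r) ℝ := Matrix.diagonal σ with hDdef
  have hD : D.PosSemidef := Matrix.posSemidef_diagonal_iff.mpr (fun i => (hσ i).le)
  have hUc : ∀ (m : ℕ) (A : Matrix (Fin r) (Fin m) ℝ), Uᵀ * (U * A) = A := by
    intro m A; rw [← Matrix.mul_assoc, hU, Matrix.one_mul]
  have hVc : ∀ (m : ℕ) (A : Matrix (Fin r) (Fin m) ℝ), Vᵀ * (V * A) = A := by
    intro m A; rw [← Matrix.mul_assoc, hV, Matrix.one_mul]
  have hXT : (U * D * Vᵀ)ᵀ = V * D * Uᵀ := by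
    rw [Matrix.transpose_mul, Matrix.transpose_mul, Matrix.transpose_transpose,
      hDdef, Matrix.diagonal_transpose, Matrix.mul_assoc]
  have hTrU : (U * D * Uᵀ).trace = ∑ i, σ i := by
    rw [Matrix.trace_mul_comm, ← Matrix.mul_assoc, hU, Matrix.one_mul, hDdef,
      Matrix.trace_diagonal]
  have hTrV : (V * D * Vᵀ).trace = ∑ i, σ i := by
    rw [Matrix.trace_mul_comm, ← Matrix.mul_assoc, hV, Matrix.one_mul, hDdef,
      Matrix.trace_diagonal]
  refine ⟨⟨?_, by rw [hTrU, hTrV]; ring⟩, ?_⟩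
  · -- positive semidefiniteness of the candidate solution
    have hfact : Matrix.fromBlocks (U * D * Uᵀ) (U * D * Vᵀ) ((U * D * Vᵀ)ᵀ) (V * D * Vᵀ)
        = Matrix.fromRows U V * D * (Matrix.fromRows U V)ᴴ := by
      rw [Matrix.conjTranspose_eq_transpose_of_trivial, Matrix.transpose_fromRows,
        Matrix.fromRows_mul, Matrix.fromRows_mul_fromCols, hXT]
    rw [hfact]
    exact hD.mul_mul_conjTranspose_same _
  · intro W₁ W₂ hM
    -- W₁ and W₂ are PSD
    have hW₁ : W₁.PosSemidef := by
      have h := hM.submatrix Sum.inl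
      have e : (Matrix.fromBlocks W₁ (U * D * Vᵀ) ((U * D * Vᵀ)ᵀ) W₂).submatrix
          Sum.inl Sum.inl = W₁ := rfl
      rwa [e] at h
    have hW₂ : W₂.PosSemidef := by
      have h := hM.submatrix Sum.inr
      have e : (Matrix.fromBlocks W₁ (U * D * Vᵀ) ((U * D * Vᵀ)ᵀ) W₂).submatrix
          Sum.inr Sum.inr = W₂ := rfl
      rwa [e] at h
    have hp₁ := proj_trace U hU hW₁
    have hp₂ := proj_trace V hV hW₂
    set Z : Matrix (Fin n₁ ⊕ Fin n₂) (Fin r) ℝ := Matrix.fromRows U (-V) with hZdef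
    have hSpsd : (Zᴴ * (Matrix.fromBlocks W₁ (U * D * Vᵀ) ((U * D * Vᵀ)ᵀ) W₂) * Z).PosSemidef :=
      hM.conjTranspose_mul_mul_same Z
    have hS : Zᴴ * (Matrix.fromBlocks W₁ (U * D * Vᵀ) ((U * D * Vᵀ)ᵀ) W₂) * Z
        = Uᵀ * W₁ * U + Vᵀ * W₂ * V - D - D := by
      rw [hZdef, hXT, Matrix.conjTranspose_eq_transpose_of_trivial,
        Matrix.transpose_fromRows, Matrix.transpose_neg,
        Matrix.fromCols_mul_fromBlocks, Matrix.fromCols_mul_fromRows]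
      simp only [Matrix.neg_mul, Matrix.mul_neg, Matrix.add_mul, Matrix.mul_assoc,
        hUc, hVc, hU, hV, Matrix.mul_one, Matrix.one_mul, neg_neg]
      abel
    have hTrS : (Zᴴ * (Matrix.fromBlocks W₁ (U * D * Vᵀ) ((U * D * Vᵀ)ᵀ) W₂) * Z).trace
        = (Uᵀ * W₁ * U).trace + (Vᵀ * W₂ * V).trace - 2 * ∑ i, σ i := by
      rw [hS, Matrix.trace_sub, Matrix.trace_sub, Matrix.trace_add, hDdef,
        Matrix.trace_diagonal]
      ring
    have hStr := psd_trace_nonneg hSpsd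
    constructor
    · linarith [hp₁.1, hp₂.1]
    · intro heq
      have h1 : (Uᵀ * W₁ * U).trace = W₁.trace := by linarith [hp₁.1, hp₂.1]
      have h2 : (Vᵀ * W₂ * V).trace = W₂.trace := by linarith [hp₁.1, hp₂.1]
      have hS0 : Zᴴ * (Matrix.fromBlocks W₁ (U * D * Vᵀ) ((U * D * Vᵀ)ᵀ) W₂) * Z = 0 := by
        apply psd_trace_zero hSpsd
        rw [hTrS, h1, h2]
        linarith
      have hMZ : (Matrix.fromBlocks W₁ (U * D * Vᵀ) ((U * D * Vᵀ)ᵀ) W₂) * Z = 0 :=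
        psd_quad_zero hM Z hS0
      rw [hZdef, Matrix.fromBlocks_mul_fromRows] at hMZ
      rw [show (0 : Matrix (Fin n₁ ⊕ Fin n₂) (Fin r) ℝ) = Matrix.fromRows 0 0 from
        (Matrix.fromRows_zero).symm] at hMZ
      obtain ⟨hr1, hr2⟩ := (Matrix.fromRows_ext_iff _ _ _ _).mp hMZ
      -- W₁ * U = U * D and W₂ * V = V * D
      have hw1U : W₁ * U = U * D := by
        have : (U * D * Vᵀ) * (-V) = -(U * D) := by
          rw [Matrix.mul_neg, Matrix.mul_assoc, Matrix.mul_assoc, hV, Matrix.mul_one]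
        rw [this] at hr1
        have h0 : W₁ * U - U * D = 0 := by rw [sub_eq_add_neg]; exact hr1
        exact sub_eq_zero.mp h0
      have hw2V : W₂ * V = V * D := by
        have h' : (U * D * Vᵀ)ᵀ * U = V * D := by
          rw [hXT, Matrix.mul_assoc, Matrix.mul_assoc, hU, Matrix.mul_one]
        rw [h', Matrix.mul_neg] at hr2
        have h0 : V * D - W₂ * V = 0 := by rw [sub_eq_add_neg]; exact hr2
        exact (sub_eq_zero.mp h0).symm
      have hW₁sym : W₁ᵀ = W₁ := by
        rw [← Matrix.conjTranspose_eq_transpose_of_trivial]; exact hW₁.isHermitian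
      have hW₂sym : W₂ᵀ = W₂ := by
        rw [← Matrix.conjTranspose_eq_transpose_of_trivial]; exact hW₂.isHermitian
      have hUW : Uᵀ * W₁ = D * Uᵀ := by
        have := congrArg Matrix.transpose hw1U
        rwa [Matrix.transpose_mul, Matrix.transpose_mul, hW₁sym, hDdef,
          Matrix.diagonal_transpose] at this
      have hVW : Vᵀ * W₂ = D * Vᵀ := by
        have := congrArg Matrix.transpose hw2V
        rwa [Matrix.transpose_mul, Matrix.transpose_mul, hW₂sym, hDdef,
          Matrix.diagonal_transpose] at this
      constructor
      · rw [hp₁.2 h1, Matrix.mul_assoc U Uᵀ W₁, hUW, ← Matrix.mul_assoc]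
      · rw [hp₂.2 h2, Matrix.mul_assoc V Vᵀ W₂, hVW, ← Matrix.mul_assoc]
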